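/- For β > 0, q ≥ 2, and odd n ≥ 3, the internal energy per particle of the Potts model on cycles satisfies U_{C_n}^q(β) > U_{C_{n+2}}^q(β). -/

import Mathlib

open scoped Classical
open Finset

/-- Number of monochromatic edges of `G` under the coloring `σ`. -/
noncomputable def monoEdges {V : Type} [Fintype V] (G : SimpleGraph V) {q : ℕ}
    (σ : V → Fin q) : ℕ :=
  (G.edgeFinset.filter fun e =>
    Sym2.lift ⟨fun u v => σ u = σ v, fun _ _ => propext eq_comm⟩ e).card

/-- The `q`-color Potts partition function of `G` at inverse temperature `β`. -/
noncomputable def pottsZ {V : Type} [Fintype V] (G : SimpleGraph V) (q : ℕ) (β : ℝ) : ℝ :=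
  ∑ σ : V → Fin q, Real.exp (-β * monoEdges G σ)

/-- The internal energy per particle: expected number of monochromatic
edges per vertex in the Potts model. -/
noncomputable def pottsU {V : Type} [Fintype V] (G : SimpleGraph V) (q : ℕ) (β : ℝ) : ℝ :=
  (Fintype.card V : ℝ)⁻¹ *
    (∑ σ : V → Fin q, (monoEdges G σ : ℝ) * Real.exp (-β * monoEdges G σ)) / pottsZ G q β

/-- The number of proper `q`-colorings of `G`. -/
noncomputable def properCount {V : Type} [Fintype V] (G : SimpleGraph V) (q : ℕ) : ℕ :=
  (Finset.univ.filter fun σ : V → Fin q => monoEdges G σ = 0).card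

namespace PottsAux

lemma sum_univ_eq {α : Type} (i1 i2 : Fintype α) {M : Type} [AddCommMonoid M] (f : α → M) :
    @Finset.sum α M _ (@Finset.univ α i1) f = @Finset.sum α M _ (@Finset.univ α i2) f := by
  have : i1 = i2 := Subsingleton.elim _ _
  subst this; rfl

/-! ### The transfer matrix -/

noncomputable def TM (q : ℕ) (w : ℝ) : Matrix (Fin q) (Fin q) ℝ :=
  Matrix.of fun a b => if a = b then w else 1

noncomputable def JJ (q : ℕ) : Matrix (Fin q) (Fin q) ℝ := Matrix.of fun _ _ => (1:ℝ)

lemma JJ_mul_JJ (q : ℕ) : JJ q * JJ q = (q : ℝ) • JJ q := by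
  ext a b; simp [JJ, Matrix.mul_apply]

lemma TM_eq (q : ℕ) (w : ℝ) :
    TM q w = (w - 1) • (1 : Matrix (Fin q) (Fin q) ℝ) + JJ q := by
  ext a b
  by_cases h : a = b <;> simp [TM, JJ, Matrix.one_apply, h]

lemma q_smul_TM_pow (q : ℕ) (w : ℝ) : ∀ j : ℕ,
    (q:ℝ) • (TM q w) ^ j = ((q:ℝ) * (w-1)^j) • (1 : Matrix (Fin q) (Fin q) ℝ)
      + ((w + q - 1)^j - (w-1)^j) • JJ q
  | 0 => by simp
  | (j+1) => by
    rw [pow_succ, ← Matrix.smul_mul, q_smul_TM_pow q w j, TM_eq]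
    simp only [Matrix.smul_mul, Matrix.mul_smul, mul_add, add_mul, Matrix.mul_one,
      Matrix.one_mul, JJ_mul_JJ]
    module

lemma trace_JJ (q : ℕ) : Matrix.trace (JJ q) = (q : ℝ) := by
  simp [JJ, Matrix.trace, Matrix.diag]

lemma trace_TM_pow (q : ℕ) (hq : q ≠ 0) (w : ℝ) (j : ℕ) :
    Matrix.trace ((TM q w) ^ j) = (w + q - 1)^j + ((q:ℝ)-1) * (w-1)^j := by
  have hq' : (q:ℝ) ≠ 0 := Nat.cast_ne_zero.mpr hq
  apply mul_left_cancel₀ hq'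
  have := congrArg Matrix.trace (q_smul_TM_pow q w j)
  simp only [Matrix.trace_add, Matrix.trace_smul, Matrix.trace_one, trace_JJ,
    Fintype.card_fin, smul_eq_mul] at this
  rw [this]; ring

lemma pathSum (q : ℕ) (w : ℝ) : ∀ (k : ℕ) (N : Matrix (Fin q) (Fin q) ℝ),
    ∑ σ : Fin (k+1) → Fin q,
      (∏ i : Fin k, TM q w (σ i.castSucc) (σ i.succ)) * N (σ (Fin.last k)) (σ 0)
      = Matrix.trace ((TM q w) ^ k * N)
  | 0, N => by
    have := Fintype.sum_equiv (Equiv.funUnique (Fin 1) (Fin q))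
      (fun σ : Fin 1 → Fin q =>
        (∏ i : Fin 0, TM q w (σ i.castSucc) (σ i.succ)) * N (σ (Fin.last 0)) (σ 0))
      (fun a => N a a)
      (fun σ => by
        simp only [Finset.univ_eq_empty, Finset.prod_empty, one_mul, Equiv.funUnique_apply]
        congr 1)
    rw [this]
    simp [Matrix.trace, Matrix.diag]
  | (k+1), N => by
    rw [← Fintype.sum_equiv (Fin.consEquiv (fun _ : Fin (k+2) => Fin q)) _ _ (fun p => rfl),
      Fintype.sum_prod_type]
    simp only [Fin.consEquiv_apply]
    have hterm : ∀ (a : Fin q) (τ : Fin (k+1) → Fin q),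
        (∏ i : Fin (k+1), TM q w ((Fin.cons (α := fun _ => Fin q) a τ) i.castSucc)
            ((Fin.cons (α := fun _ => Fin q) a τ) i.succ))
          * N ((Fin.cons (α := fun _ => Fin q) a τ) (Fin.last (k+1)))
            ((Fin.cons (α := fun _ => Fin q) a τ) 0)
        = (∏ i : Fin k, TM q w (τ i.castSucc) (τ i.succ))
            * (N (τ (Fin.last k)) a * TM q w a (τ 0)) := by
      intro a τ
      have h1 : (Fin.cons a τ : Fin (k+2) → Fin q) (Fin.last (k+1)) = τ (Fin.last k) := by
        rw [← Fin.succ_last, Fin.cons_succ]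
      rw [Fin.prod_univ_succ, h1]
      simp only [Fin.cons_zero, Fin.castSucc_zero, Fin.cons_succ, ← Fin.succ_castSucc]
      ring
    rw [Finset.sum_congr rfl fun a _ => Finset.sum_congr rfl fun τ _ => hterm a τ]
    rw [Finset.sum_comm]
    have h2 : ∀ τ : Fin (k+1) → Fin q,
        ∑ a : Fin q, (∏ i : Fin k, TM q w (τ i.castSucc) (τ i.succ))
          * (N (τ (Fin.last k)) a * TM q w a (τ 0))
        = (∏ i : Fin k, TM q w (τ i.castSucc) (τ i.succ))
            * (N * TM q w) (τ (Fin.last k)) (τ 0) := by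
      intro τ
      rw [Matrix.mul_apply, Finset.mul_sum]
    rw [Finset.sum_congr rfl fun τ _ => h2 τ, pathSum q w k (N * TM q w),
      ← Matrix.mul_assoc, Matrix.trace_mul_comm, ← Matrix.mul_assoc, ← pow_succ']

/-! ### Sums over colorings of the cycle -/

lemma cycleSum (q : ℕ) (w : ℝ) (m : ℕ) :
    ∑ σ : Fin (m+3) → Fin q, ∏ j : Fin (m+3), TM q w (σ j) (σ (j+1))
      = Matrix.trace ((TM q w) ^ (m+3)) := by
  have h : ∀ σ : Fin (m+3) → Fin q,
      ∏ j : Fin (m+3), TM q w (σ j) (σ (j+1))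
        = (∏ i : Fin (m+2), TM q w (σ i.castSucc) (σ i.succ))
            * TM q w (σ (Fin.last (m+2))) (σ 0) := by
    intro σ
    rw [Fin.prod_univ_castSucc (f := fun j : Fin (m+3) => TM q w (σ j) (σ (j+1)))]
    simp only [Fin.coeSucc_eq_succ, Fin.last_add_one]
  rw [Finset.sum_congr rfl fun σ _ => h σ, pathSum q w (m+2) (TM q w), ← pow_succ]

lemma markedSum (q : ℕ) (w : ℝ) (m : ℕ) :
    ∑ σ : Fin (m+3) → Fin q,
      (if σ (Fin.last (m+2)) = σ (Fin.last (m+2) + 1) then (1:ℝ) else 0)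
        * ∏ j : Fin (m+3), TM q w (σ j) (σ (j+1))
      = w * Matrix.trace ((TM q w) ^ (m+2)) := by
  have key : ∀ x y : Fin q,
      (if x = y then (1:ℝ) else 0) * TM q w x y
        = (w • (1 : Matrix (Fin q) (Fin q) ℝ)) x y := by
    intro x y
    by_cases h : x = y <;> simp [TM, Matrix.one_apply, h]
  have h : ∀ σ : Fin (m+3) → Fin q,
      (if σ (Fin.last (m+2)) = σ (Fin.last (m+2) + 1) then (1:ℝ) else 0)
        * ∏ j : Fin (m+3), TM q w (σ j) (σ (j+1))
        = (∏ i : Fin (m+2), TM q w (σ i.castSucc) (σ i.succ))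
            * (w • (1 : Matrix (Fin q) (Fin q) ℝ)) (σ (Fin.last (m+2))) (σ 0) := by
    intro σ
    rw [Fin.prod_univ_castSucc (f := fun j : Fin (m+3) => TM q w (σ j) (σ (j+1)))]
    simp only [Fin.coeSucc_eq_succ, Fin.last_add_one]
    rw [← key]
    ring
  rw [Finset.sum_congr rfl fun σ _ => h σ, pathSum q w (m+2) _, Matrix.mul_smul,
    Matrix.mul_one, Matrix.trace_smul, smul_eq_mul]

noncomputable def rotE (n q : ℕ) (c : Fin (n+3)) :
    (Fin (n+3) → Fin q) ≃ (Fin (n+3) → Fin q) where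
  toFun := fun σ => fun x => σ (x - c)
  invFun := fun σ => fun x => σ (x + c)
  left_inv := fun σ => by funext x; simp
  right_inv := fun σ => by funext x; simp

lemma rotSum (q : ℕ) (w : ℝ) (m : ℕ) (i c : Fin (m+3)) :
    ∑ σ : Fin (m+3) → Fin q,
      (if σ i = σ (i+1) then (1:ℝ) else 0) * ∏ j : Fin (m+3), TM q w (σ j) (σ (j+1))
    = ∑ σ : Fin (m+3) → Fin q,
      (if σ (i+c) = σ (i+c+1) then (1:ℝ) else 0)
        * ∏ j : Fin (m+3), TM q w (σ j) (σ (j+1)) := by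
  apply Fintype.sum_equiv (rotE m q c)
  intro σ
  show (if σ i = σ (i+1) then (1:ℝ) else 0) * ∏ j : Fin (m+3), TM q w (σ j) (σ (j+1))
    = (if σ (i+c-c) = σ (i+c+1-c) then (1:ℝ) else 0)
        * ∏ j : Fin (m+3), TM q w (σ (j-c)) (σ (j+1-c))
  have e1 : i + c - c = i := by open Fin.CommRing in ring
  have e2 : i + c + 1 - c = i + 1 := by open Fin.CommRing in ring
  rw [e1, e2]
  congr 1
  exact Fintype.prod_equiv (Equiv.addRight c) _ _
    (fun j => by
      simp only [Equiv.coe_addRight]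
      rw [show j + c - c = j from by open Fin.CommRing in ring, show j + c + 1 - c = j + 1 from by open Fin.CommRing in ring])

/-! ### The edge set of the cycle -/

lemma two_ne_zero_fin (m : ℕ) : (2 : Fin (m+3)) ≠ 0 := by
  intro h
  have := congrArg Fin.val h
  simp [Fin.val_two] at this
  rw [Nat.mod_eq_of_lt (by omega)] at this
  omega

lemma cycle_edge_inj (m : ℕ) :
    Function.Injective (fun i : Fin (m+3) => s(i, i+1)) := by
  intro i j h
  simp only [Sym2.eq_iff] at h
  rcases h with ⟨h1, _⟩ | ⟨h1, h2⟩
  · exact h1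
  · exfalso
    have : i = i + 2 := by
      conv_lhs => rw [h1, ← h2]
      open Fin.CommRing in ring
    exact two_ne_zero_fin m (left_eq_add.mp this)

lemma cycle_edgeFinset (m : ℕ) (inst : Fintype (SimpleGraph.cycleGraph (m+3)).edgeSet) :
    @SimpleGraph.edgeFinset (Fin (m+3)) (SimpleGraph.cycleGraph (m+3)) inst
      = Finset.univ.image (fun i : Fin (m+3) => s(i, i+1)) := by
  ext e
  induction e with
  | _ u v =>
    simp only [SimpleGraph.mem_edgeFinset, SimpleGraph.mem_edgeSet, Finset.mem_image,
      Finset.mem_univ, true_and]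
    constructor
    · intro hadj
      rcases (SimpleGraph.cycleGraph_adj (n := m+1)).mp hadj with h | h
      · have hu : u = v + 1 := by
          rw [sub_eq_iff_eq_add] at h; rw [h]; exact add_comm 1 _
        exact ⟨v, by rw [hu, Sym2.eq_swap]⟩
      · have hv : v = u + 1 := by
          rw [sub_eq_iff_eq_add] at h; rw [h]; exact add_comm 1 _
        exact ⟨u, by rw [hv]⟩
    · rintro ⟨i, hi⟩
      have hadj : (SimpleGraph.cycleGraph (m+3)).Adj i (i+1) := by
        rw [SimpleGraph.cycleGraph_adj (n := m+1)]
        right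
        exact add_sub_cancel_left i 1
      rw [← SimpleGraph.mem_edgeSet, ← hi, SimpleGraph.mem_edgeSet]
      exact hadj

lemma monoEdges_cycle (m q : ℕ) (σ : Fin (m+3) → Fin q) :
    monoEdges (SimpleGraph.cycleGraph (m+3)) σ
      = ∑ i : Fin (m+3), if σ i = σ (i+1) then 1 else 0 := by
  unfold monoEdges
  rw [cycle_edgeFinset m _, Finset.filter_image,
    Finset.card_image_of_injective _ (cycle_edge_inj m), Finset.card_filter]
  exact Finset.sum_congr rfl fun i _ => by simp; congr

/-! ### The two basic formulas -/

lemma exp_eq_prod (m q : ℕ) (β : ℝ) (σ : Fin (m+3) → Fin q) :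
    Real.exp (-β * monoEdges (SimpleGraph.cycleGraph (m+3)) σ)
      = ∏ j : Fin (m+3), TM q (Real.exp (-β)) (σ j) (σ (j+1)) := by
  rw [mul_comm, Real.exp_nat_mul, monoEdges_cycle, ← Finset.prod_pow_eq_pow_sum]
  exact Finset.prod_congr rfl fun j _ => by
    by_cases h : σ j = σ (j+1) <;> simp [TM, h]

lemma Z_cycle (m q : ℕ) (hq : q ≠ 0) (β : ℝ) :
    pottsZ (SimpleGraph.cycleGraph (m+3)) q β
      = (Real.exp (-β) + q - 1)^(m+3) + ((q:ℝ)-1) * (Real.exp (-β) - 1)^(m+3) := by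
  unfold pottsZ
  rw [sum_univ_eq _ (Pi.instFintype) _]
  rw [Finset.sum_congr rfl fun σ _ => exp_eq_prod m q β σ, cycleSum,
    trace_TM_pow q hq]

lemma num_cycle (m q : ℕ) (hq : q ≠ 0) (β : ℝ) :
    ∑ σ : Fin (m+3) → Fin q,
        (monoEdges (SimpleGraph.cycleGraph (m+3)) σ : ℝ)
          * Real.exp (-β * monoEdges (SimpleGraph.cycleGraph (m+3)) σ)
      = (m+3 : ℝ) * (Real.exp (-β)
          * ((Real.exp (-β) + q - 1)^(m+2) + ((q:ℝ)-1) * (Real.exp (-β) - 1)^(m+2))) := by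
  set w := Real.exp (-β) with hw
  have hterm : ∀ σ : Fin (m+3) → Fin q,
      (monoEdges (SimpleGraph.cycleGraph (m+3)) σ : ℝ)
          * Real.exp (-β * monoEdges (SimpleGraph.cycleGraph (m+3)) σ)
        = ∑ i : Fin (m+3), (if σ i = σ (i+1) then (1:ℝ) else 0)
            * ∏ j : Fin (m+3), TM q w (σ j) (σ (j+1)) := by
    intro σ
    rw [exp_eq_prod m q β σ, monoEdges_cycle, ← Finset.sum_mul]
    congr 1
    push_cast
    exact Finset.sum_congr rfl fun i _ => by
      by_cases h : σ i = σ (i+1) <;> simp [h]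
  rw [Finset.sum_congr rfl fun σ _ => hterm σ, Finset.sum_comm]
  have hrot : ∀ i : Fin (m+3),
      ∑ σ : Fin (m+3) → Fin q, (if σ i = σ (i+1) then (1:ℝ) else 0)
          * ∏ j : Fin (m+3), TM q w (σ j) (σ (j+1))
      = ∑ σ : Fin (m+3) → Fin q,
          (if σ (Fin.last (m+2)) = σ (Fin.last (m+2) + 1) then (1:ℝ) else 0)
            * ∏ j : Fin (m+3), TM q w (σ j) (σ (j+1)) := by
    intro i
    have := rotSum q w m i (Fin.last (m+2) - i)
    rw [show i + (Fin.last (m+2) - i) = Fin.last (m+2) from by open Fin.CommRing in ring] at this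
    exact this
  rw [Finset.sum_congr rfl fun i _ => hrot i, Finset.sum_const, Finset.card_univ,
    Fintype.card_fin, nsmul_eq_mul, markedSum, trace_TM_pow q hq]
  push_cast
  ring

lemma Zpos {V : Type} [Fintype V] (G : SimpleGraph V) (q : ℕ) (hq : q ≠ 0) (β : ℝ) :
    0 < pottsZ G q β := by
  have : Nonempty (Fin q) := ⟨⟨0, Nat.pos_of_ne_zero hq⟩⟩
  exact Finset.sum_pos (fun σ _ => Real.exp_pos _) Finset.univ_nonempty

lemma U_cycle (m q : ℕ) (hq : q ≠ 0) (β : ℝ) :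
    pottsU (SimpleGraph.cycleGraph (m+3)) q β
      = Real.exp (-β)
          * ((Real.exp (-β) + q - 1)^(m+2) + ((q:ℝ)-1) * (Real.exp (-β) - 1)^(m+2))
        / ((Real.exp (-β) + q - 1)^(m+3) + ((q:ℝ)-1) * (Real.exp (-β) - 1)^(m+3)) := by
  unfold pottsU
  rw [sum_univ_eq _ (Pi.instFintype) _]
  rw [num_cycle m q hq β, Z_cycle m q hq β, Fintype.card_fin]
  have h3 : ((m+3 : ℕ) : ℝ) ≠ 0 := by positivity
  push_cast
  push_cast at h3
  field_simp

end PottsAux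
theorem potts_energy_cycle_odd_decreasing (n : ℕ) (hn : 3 ≤ n) (hodd : Odd n)
    (q : ℕ) (hq : 2 ≤ q) (β : ℝ) (hβ : 0 < β) :
    pottsU (SimpleGraph.cycleGraph (n + 2)) q β < pottsU (SimpleGraph.cycleGraph n) q β := by
  -- write n = m + 3 with m even
  obtain ⟨m, rfl⟩ : ∃ m, n = m + 3 := ⟨n - 3, by omega⟩
  obtain ⟨t, ht⟩ : ∃ t, m + 2 = t * 2 := by
    rcases hodd with ⟨s, hs⟩
    exact ⟨s, by omega⟩
  have hq0 : q ≠ 0 := by omega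
  set w := Real.exp (-β) with hw
  have hw0 : 0 < w := Real.exp_pos _
  have hw1 : w < 1 := by
    rw [hw]
    exact Real.exp_lt_one_iff.mpr (by linarith)
  set A : ℝ := w + q - 1 with hA
  set B : ℝ := w - 1 with hB
  set Q : ℝ := (q:ℝ) - 1 with hQ
  have hq2 : (2:ℝ) ≤ (q:ℝ) := by exact_mod_cast hq
  have hApos : 0 < A := by simp only [hA]; linarith
  have hQpos : 0 < Q := by simp only [hQ]; linarith
  have hBneg : B < 0 := by simp only [hB]; linarith
  have hABpos : 0 < A + B := by simp only [hA, hB]; linarith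
  have hABq : A - B = (q:ℝ) := by simp only [hA, hB]; ring
  -- the two denominators are positive
  have hZ1 : 0 < A^(m+3) + Q * B^(m+3) := by
    have := PottsAux.Zpos (SimpleGraph.cycleGraph (m+3)) q hq0 β
    rwa [PottsAux.Z_cycle m q hq0 β] at this
  have hZ2 : 0 < A^(m+5) + Q * B^(m+5) := by
    have := PottsAux.Zpos (SimpleGraph.cycleGraph (m+5)) q hq0 β
    rwa [PottsAux.Z_cycle (m+2) q hq0 β] at this
  rw [show m + 3 + 2 = (m + 2) + 3 from by ring, PottsAux.U_cycle (m+2) q hq0 β,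
    PottsAux.U_cycle m q hq0 β]
  rw [← hw, ← hA, ← hB, ← hQ]
  rw [show m + 2 + 2 = m + 4 from rfl, show m + 2 + 3 = m + 5 from rfl]
  rw [div_lt_div_iff₀ hZ2 hZ1]
  -- replace powers by squares
  set X : ℝ := A ^ t with hX
  set Y : ℝ := B ^ t with hY
  have hXpos : 0 < X := pow_pos hApos t
  have hYne : Y ≠ 0 := pow_ne_zero t (ne_of_lt hBneg)
  have eA2 : A^(m+2) = X^2 := by rw [hX, ← pow_mul, ← ht]
  have eA3 : A^(m+3) = X^2 * A := by rw [show m+3 = (m+2)+1 from rfl, pow_succ, eA2]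
  have eA4 : A^(m+4) = X^2 * A^2 := by
    rw [show m+4 = (m+2)+2 from rfl, pow_add, eA2]
  have eA5 : A^(m+5) = X^2 * A^3 := by
    rw [show m+5 = (m+2)+3 from rfl, pow_add, eA2]
  have eB2 : B^(m+2) = Y^2 := by rw [hY, ← pow_mul, ← ht]
  have eB3 : B^(m+3) = Y^2 * B := by rw [show m+3 = (m+2)+1 from rfl, pow_succ, eB2]
  have eB4 : B^(m+4) = Y^2 * B^2 := by
    rw [show m+4 = (m+2)+2 from rfl, pow_add, eB2]
  have eB5 : B^(m+5) = Y^2 * B^3 := by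
    rw [show m+5 = (m+2)+3 from rfl, pow_add, eB2]
  rw [eA2, eA3, eA4, eA5, eB2, eB3, eB4, eB5]
  have key : w * (X^2 + Q * Y^2) * (X^2 * A^3 + Q * (Y^2 * B^3))
      - w * (X^2 * A^2 + Q * (Y^2 * B^2)) * (X^2 * A + Q * (Y^2 * B))
      = w * Q * (X*Y)^2 * ((A-B)^2 * (A+B)) := by ring
  have hXY : X * Y ≠ 0 := mul_ne_zero hXpos.ne' hYne
  have hXYpos : 0 < (X*Y)^2 := lt_of_le_of_ne (sq_nonneg _) (Ne.symm (pow_ne_zero 2 hXY))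
  have hABsq : 0 < (A-B)^2 * (A+B) := by
    apply mul_pos _ hABpos
    rw [hABq]
    exact pow_pos (by linarith) 2
  have hpos : 0 < w * Q * (X*Y)^2 * ((A-B)^2 * (A+B)) :=
    mul_pos (mul_pos (mul_pos hw0 hQpos) hXYpos) hABsq
  linarith [key, hpos]
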